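/- Assume δ is ramified, i.e. there exists u ∈ ℤ_pˣ with δ(u) ≠ 0. Then every K₁-invariant element f of Ind_P^G ε_δ takes values in the line k × {0}: f(g)₂ = 0 for all g ∈ G. (The hard direction of Proposition 2.2 of the paper: the K₁-invariants of Ind_P^G ε_δ coincide with those of its subrepresentation Ind_P^G χ.) -/

import Mathlib

open Matrix

/-- membership in `K_n = {g ∈ GL₂(ℤ_p) : g ≡ 1 (mod pⁿ)}`:
every entry of `g − 1` has norm at most `p^{-n}`. -/
def InKn (p : ℕ) [Fact p.Prime] (n : ℕ) (u : GL (Fin 2) ℚ_[p]) : Prop :=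
  ∀ i j, ‖(u : Matrix (Fin 2) (Fin 2) ℚ_[p]) i j
            - (1 : Matrix (Fin 2) (Fin 2) ℚ_[p]) i j‖ ≤ (p : ℝ) ^ (-(n : ℤ))

/-- Fermat: if `‖u‖ = 1` then `u^(p-1) ≡ 1 mod p`. -/
lemma fermat_aux (p : ℕ) [Fact p.Prime] (u : ℚ_[p]) (hu : ‖u‖ = 1) :
    ‖u ^ (p - 1) - 1‖ ≤ (p : ℝ) ^ (-1 : ℤ) := by
  set z : ℤ_[p] := ⟨u, hu.le⟩ with hz
  have hzn : ‖z‖ = 1 := by rw [PadicInt.norm_def]; exact hu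
  have hdvd_iff : ∀ w : ℤ_[p], PadicInt.toZMod w = 0 ↔ ‖w‖ < 1 := by
    intro w
    rw [← RingHom.mem_ker, PadicInt.ker_toZMod, PadicInt.maximalIdeal_eq_span_p,
      Ideal.mem_span_singleton, ← PadicInt.norm_lt_one_iff_dvd]
  have hz0 : PadicInt.toZMod z ≠ 0 := by
    rw [Ne, hdvd_iff]; simp [hzn]
  have hpow : PadicInt.toZMod (z ^ (p - 1) - 1) = 0 := by
    have := ZMod.pow_card_sub_one_eq_one hz0
    simp [map_sub, map_pow, this]
  have hlt : ‖z ^ (p - 1) - 1‖ < 1 := (hdvd_iff _).1 hpow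
  have hle : ‖z ^ (p - 1) - 1‖ ≤ (p : ℝ) ^ (-1 : ℤ) := by
    rw [PadicInt.norm_le_pow_iff_norm_lt_pow_add_one]
    simpa using hlt
  have hco : ((z ^ (p - 1) - 1 : ℤ_[p]) : ℚ_[p]) = u ^ (p - 1) - 1 := by
    push_cast [hz]; rfl
  rwa [PadicInt.norm_def, hco] at hle

/-- upper triangular `!![a,b;0,d]` as an element of `GL₂(ℚ_p)`. -/
noncomputable def glUT (p : ℕ) [Fact p.Prime] (a b d : ℚ_[p]) (ha : a ≠ 0) (hd : d ≠ 0) :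
    GL (Fin 2) ℚ_[p] :=
  ⟨!![a, b; 0, d], !![a⁻¹, -(a⁻¹ * b * d⁻¹); 0, d⁻¹],
    by rw [Matrix.mul_fin_two, Matrix.one_fin_two]; ext i j; fin_cases i <;> fin_cases j <;> simp <;> field_simp <;> ring,
    by rw [Matrix.mul_fin_two, Matrix.one_fin_two]; ext i j; fin_cases i <;> fin_cases j <;> simp <;> field_simp <;> ring⟩

/-- `!![0,1;1,x]` (i.e. `w · u(x)`) as an element of `GL₂(ℚ_p)`. -/
noncomputable def glW (p : ℕ) [Fact p.Prime] (x : ℚ_[p]) : GL (Fin 2) ℚ_[p] :=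
  ⟨!![0, 1; 1, x], !![-x, 1; 1, 0],
    by rw [Matrix.mul_fin_two, Matrix.one_fin_two]; congr 1 <;> ring,
    by rw [Matrix.mul_fin_two, Matrix.one_fin_two]; congr 1 <;> ring⟩

/-- lower unipotent `!![1,0;e,1]` as an element of `GL₂(ℚ_p)`. -/
noncomputable def glL (p : ℕ) [Fact p.Prime] (e : ℚ_[p]) : GL (Fin 2) ℚ_[p] :=
  ⟨!![1, 0; e, 1], !![1, 0; -e, 1],
    by rw [Matrix.mul_fin_two, Matrix.one_fin_two]; congr 1 <;> ring,
    by rw [Matrix.mul_fin_two, Matrix.one_fin_two]; congr 1 <;> ring⟩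


/-- the hard direction of Proposition 2.2 of the paper.
`k` is a field of characteristic `p`, `χ = (χ₁, χ₂)` a smooth character of the
diagonal torus of `G = GL₂(ℚ_p)`, `δ : ℚ_pˣ → (k, +)` a ramified homomorphism,
and `f` an element of `Ind_P^G ε_δ` (i.e. `f : G → k × k` satisfies the
`ε_δ`-transformation rule under left translation by upper triangular matrices
and is smooth).  If `f` is `K₁`-invariant, then `f` takes values in the line
`k × {0}`. -/
theorem statement_1 (p : ℕ) [Fact p.Prime] (k : Type*) [Field k] [CharP k p]
    (χ₁ χ₂ : ℚ_[p]ˣ →* kˣ)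
    -- smoothness of the character `χ = χ₁ ⊗ χ₂`:
    (hχ₁ : ∃ N : ℕ, 1 ≤ N ∧
      ∀ u : ℚ_[p]ˣ, ‖(u : ℚ_[p]) - 1‖ ≤ (p : ℝ) ^ (-(N : ℤ)) → χ₁ u = 1)
    (hχ₂ : ∃ N : ℕ, 1 ≤ N ∧
      ∀ u : ℚ_[p]ˣ, ‖(u : ℚ_[p]) - 1‖ ≤ (p : ℝ) ^ (-(N : ℤ)) → χ₂ u = 1)
    -- `δ : ℚ_pˣ → (k, +)` is a homomorphism:
    (δ : ℚ_[p]ˣ → k) (hδ : ∀ x y : ℚ_[p]ˣ, δ (x * y) = δ x + δ y)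
    -- `δ` is ramified: nonzero at some unit `u ∈ ℤ_pˣ`:
    (hram : ∃ u : ℚ_[p]ˣ, ‖(u : ℚ_[p])‖ = 1 ∧ δ u ≠ 0)
    (f : GL (Fin 2) ℚ_[p] → k × k)
    -- the transformation rule of `Ind_P^G ε_δ`:
    (htrans : ∀ b g : GL (Fin 2) ℚ_[p],
      (b : Matrix (Fin 2) (Fin 2) ℚ_[p]) 1 0 = 0 →
      ∀ a d : ℚ_[p]ˣ,
        (b : Matrix (Fin 2) (Fin 2) ℚ_[p]) 0 0 = (a : ℚ_[p]) →
        (b : Matrix (Fin 2) (Fin 2) ℚ_[p]) 1 1 = (d : ℚ_[p]) →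
        f (b * g) = ((χ₁ a : k) * (χ₂ d : k) * ((f g).1 + δ (a * d⁻¹) * (f g).2),
                     (χ₁ a : k) * (χ₂ d : k) * (f g).2))
    -- smoothness of `f`:
    (hsm : ∃ n : ℕ, 1 ≤ n ∧ ∀ g u, InKn p n u → f (g * u) = f g)
    -- `f` is `K₁`-invariant:
    (hK1 : ∀ g u, InKn p 1 u → f (g * u) = f g) :
    ∀ g, (f g).2 = 0 := by
  obtain ⟨u, hu1, hδu⟩ := hram
  -- basic facts about δ
  have hδ1 : δ 1 = 0 := by
    have h := hδ 1 1; rw [mul_one] at h; exact (left_eq_add.mp h)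
  have hδinv : ∀ x : ℚ_[p]ˣ, δ x⁻¹ = - δ x := by
    intro x
    have h := hδ x x⁻¹
    rw [mul_inv_cancel, hδ1] at h
    linear_combination -h
  have hδpow : ∀ (x : ℚ_[p]ˣ) (n : ℕ), δ (x ^ n) = n • δ x := by
    intro x n
    induction n with
    | zero => simpa using hδ1
    | succ n ih => rw [pow_succ, hδ, ih, succ_nsmul]
  -- the special unit v ≡ 1 mod p with δ v ≠ 0
  set vu : ℚ_[p]ˣ := u ^ (p - 1) with hvu
  have hp2 : 2 ≤ p := (Fact.out : p.Prime).two_le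
  have hδv : δ vu ≠ 0 := by
    rw [hvu, hδpow, nsmul_eq_mul]
    have hpk : ((p : ℕ) : k) = 0 := CharP.cast_eq_zero k p
    have hcast : ((p - 1 : ℕ) : k) = -1 := by
      rw [Nat.cast_sub (by omega : 1 ≤ p), hpk]; ring
    rw [hcast]
    simpa using hδu
  have hv1 : ‖(vu : ℚ_[p]) - 1‖ ≤ (p : ℝ) ^ (-1 : ℤ) := by
    have h := fermat_aux p (u : ℚ_[p]) hu1
    rw [hvu]
    push_cast
    exact h
  have hvne : (vu : ℚ_[p]) ≠ 0 := Units.ne_zero vu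
  have hvnorm : ‖(vu : ℚ_[p])‖ = 1 := by
    rw [hvu]
    push_cast
    rw [norm_pow, hu1, one_pow]
  have hp0 : (0 : ℝ) ≤ (p : ℝ) ^ (-1 : ℤ) := by positivity
  -- the diagonal matrix Dv = diag(v, 1) lies in K₁
  set Dv : GL (Fin 2) ℚ_[p] := glUT p (vu : ℚ_[p]) 0 1 hvne one_ne_zero with hDv
  have hDvK : InKn p 1 Dv := by
    intro i j
    fin_cases i <;> fin_cases j <;>
      simp [hDv, glUT, Matrix.one_fin_two] <;> simpa using hv1
  -- Step 1: (f 1).2 = 0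
  have key1 : (f 1).2 = 0 := by
    have hinv : f (Dv * 1) = f 1 := by
      rw [mul_one]
      have h := hK1 1 Dv hDvK
      rwa [one_mul] at h
    have ht := htrans Dv 1 (by simp [hDv, glUT]) vu 1
      (by simp [hDv, glUT]) (by simp [hDv, glUT])
    rw [hinv] at ht
    simp only [_root_.map_one, Units.val_one, one_mul, mul_one, inv_one] at ht
    by_cases hc : (χ₁ vu : k) = 1
    · have h1 := congrArg Prod.fst ht
      simp only [hc, one_mul] at h1
      have h0 : δ vu * (f 1).2 = 0 := by linear_combination -h1
      exact (mul_eq_zero.mp h0).resolve_left hδv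
    · have h2 := congrArg Prod.snd ht
      simp only at h2
      have h0 : (1 - (χ₁ vu : k)) * (f 1).2 = 0 := by linear_combination h2
      rcases mul_eq_zero.mp h0 with h | h
      · exact absurd (sub_eq_zero.mp h) (fun he => hc he.symm)
      · exact h
  -- Step 2: (f (w u(x))).2 = 0 for ‖x‖ ≤ 1
  have key2 : ∀ x : ℚ_[p], ‖x‖ ≤ 1 → (f (glW p x)).2 = 0 := by
    intro x hx
    have hinv : f (glW p x * Dv) = f (glW p x) := hK1 _ Dv hDvK
    -- decompose w u(x) · Dv = diag(1,v) · w u(x/v)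
    have hdec : glW p x * Dv = glUT p 1 0 (vu : ℚ_[p]) one_ne_zero hvne
        * glW p (x * (vu : ℚ_[p])⁻¹) := by
      apply Units.ext
      show _ = _
      rw [Units.val_mul, Units.val_mul]
      simp only [hDv, glUT, glW, Matrix.mul_fin_two]
      ext i j; fin_cases i <;> fin_cases j <;> simp <;> field_simp <;> ring
    -- shift back: f (w u(x/v)) = f (w u(x))
    have hshift : f (glW p (x * (vu : ℚ_[p])⁻¹)) = f (glW p x) := by
      set t : ℚ_[p] := x * (vu : ℚ_[p])⁻¹ - x with hts
      have htK : InKn p 1 (glUT p 1 t 1 one_ne_zero one_ne_zero) := by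
        have htn : ‖t‖ ≤ (p : ℝ) ^ (-1 : ℤ) := by
          have hrw : t = x * (vu : ℚ_[p])⁻¹ * (1 - (vu : ℚ_[p])) := by
            rw [hts]; field_simp
          rw [hrw, norm_mul, norm_mul, norm_inv, hvnorm, norm_sub_rev]
          have h1 : ‖x‖ * ‖(vu : ℚ_[p]) - 1‖ ≤ 1 * ((p : ℝ) ^ (-1 : ℤ)) :=
            mul_le_mul hx hv1 (norm_nonneg _) zero_le_one
          simpa using h1
        intro i j
        fin_cases i <;> fin_cases j <;>
          simp [glUT, Matrix.one_fin_two] <;> simpa using htn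
      have hmul : glW p x * glUT p 1 t 1 one_ne_zero one_ne_zero
          = glW p (x * (vu : ℚ_[p])⁻¹) := by
        apply Units.ext
        show _ = _
        rw [Units.val_mul]
        simp only [glUT, glW, Matrix.mul_fin_two]
        congr 1 <;> (rw [hts]; ring_nf)
      have h := hK1 (glW p x) _ htK
      rwa [hmul] at h
    have ht := htrans (glUT p 1 0 (vu : ℚ_[p]) one_ne_zero hvne)
      (glW p (x * (vu : ℚ_[p])⁻¹)) (by simp [glUT]) 1 vu
      (by simp [glUT]) (by simp [glUT])
    rw [← hdec, hinv, hshift] at ht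
    simp only [_root_.map_one, Units.val_one, one_mul, hδinv] at ht
    by_cases hc : (χ₂ vu : k) = 1
    · have h1 := congrArg Prod.fst ht
      simp only [hc, one_mul] at h1
      have h0 : (- δ vu) * (f (glW p x)).2 = 0 := by linear_combination -h1
      have := (mul_eq_zero.mp h0).resolve_left (by simpa using hδv)
      exact this
    · have h2 := congrArg Prod.snd ht
      simp only at h2
      have h0 : (1 - (χ₂ vu : k)) * (f (glW p x)).2 = 0 := by linear_combination h2
      rcases mul_eq_zero.mp h0 with h | h
      · exact absurd (sub_eq_zero.mp h) (fun he => hc he.symm)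
      · exact h
  -- Step 3: general g via explicit Iwasawa decomposition
  intro g
  set A := (g : Matrix (Fin 2) (Fin 2) ℚ_[p]) 0 0 with hA
  set B := (g : Matrix (Fin 2) (Fin 2) ℚ_[p]) 0 1 with hB
  set C := (g : Matrix (Fin 2) (Fin 2) ℚ_[p]) 1 0 with hC
  set D := (g : Matrix (Fin 2) (Fin 2) ℚ_[p]) 1 1 with hD
  have hdet : A * D - B * C ≠ 0 := by
    have h : ((g : Matrix (Fin 2) (Fin 2) ℚ_[p]) * ((g⁻¹ : GL (Fin 2) ℚ_[p]) :
        Matrix (Fin 2) (Fin 2) ℚ_[p])).det = 1 := by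
      rw [← Units.val_mul, mul_inv_cancel]
      simp
    rw [Matrix.det_mul] at h
    have hd0 : (g : Matrix (Fin 2) (Fin 2) ℚ_[p]).det ≠ 0 := by
      intro h0; rw [h0, zero_mul] at h; exact zero_ne_one h
    rwa [Matrix.det_fin_two, ← hA, ← hB, ← hC, ← hD] at hd0
  by_cases hcd : ‖D‖ ≤ ‖C‖
  · -- big cell: g = B' · w u(D/C)
    have hCne : C ≠ 0 := by
      intro h0
      rw [h0, norm_zero] at hcd
      have hD0 : D = 0 := norm_le_zero_iff.mp hcd
      apply hdet
      rw [h0, hD0]; ring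
    have hene : (B * C - A * D) / C ≠ 0 := by
      apply div_ne_zero _ hCne
      intro h0
      apply hdet
      linear_combination -h0
    have hxnorm : ‖D / C‖ ≤ 1 := by
      rw [norm_div, div_le_one (norm_pos_iff.mpr hCne)]
      exact hcd
    have hdec : g = glUT p ((B * C - A * D) / C) A C hene hCne * glW p (D / C) := by
      apply Units.ext
      show _ = _
      rw [Units.val_mul]
      conv_lhs => rw [Matrix.eta_fin_two (g : Matrix (Fin 2) (Fin 2) ℚ_[p])]
      simp only [glUT, glW, Matrix.mul_fin_two, ← hA, ← hB, ← hC, ← hD]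
      ext i j; fin_cases i <;> fin_cases j <;> simp <;> field_simp <;> ring
    have ht := htrans (glUT p ((B * C - A * D) / C) A C hene hCne) (glW p (D / C))
      (by simp [glUT]) (Units.mk0 _ hene) (Units.mk0 C hCne)
      (by simp [glUT]) (by simp [glUT])
    rw [← hdec] at ht
    rw [ht]
    simp [key2 (D / C) hxnorm]
  · -- g = B' · (lower unipotent in K₁)
    push_neg at hcd
    have hDne : D ≠ 0 := by
      intro h0
      rw [h0, norm_zero] at hcd
      exact absurd hcd (not_lt.mpr (norm_nonneg _))
    have hane : (A * D - B * C) / D ≠ 0 := div_ne_zero hdet hDne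
    have hen : ‖C / D‖ ≤ (p : ℝ) ^ (-1 : ℤ) := by
      rw [Padic.norm_le_pow_iff_norm_lt_pow_add_one]
      have : ‖C / D‖ < 1 := by
        rw [norm_div, div_lt_one (norm_pos_iff.mpr hDne)]
        exact hcd
      simpa using this
    have hLK : InKn p 1 (glL p (C / D)) := by
      intro i j
      fin_cases i <;> fin_cases j <;>
        simp [glL, Matrix.one_fin_two] <;> simpa using hen
    have hfL : f (glL p (C / D)) = f 1 := by
      have h := hK1 1 (glL p (C / D)) hLK
      rwa [one_mul] at h
    have hdec : g = glUT p ((A * D - B * C) / D) B D hane hDne * glL p (C / D) := by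
      apply Units.ext
      show _ = _
      rw [Units.val_mul]
      conv_lhs => rw [Matrix.eta_fin_two (g : Matrix (Fin 2) (Fin 2) ℚ_[p])]
      simp only [glUT, glL, Matrix.mul_fin_two, ← hA, ← hB, ← hC, ← hD]
      ext i j; fin_cases i <;> fin_cases j <;> simp <;> field_simp <;> ring
    have ht := htrans (glUT p ((A * D - B * C) / D) B D hane hDne) (glL p (C / D))
      (by simp [glUT]) (Units.mk0 _ hane) (Units.mk0 D hDne)
      (by simp [glUT]) (by simp [glUT])
    rw [← hdec] at ht
    rw [ht]
    simp [hfL, key1]
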